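/- arXiv:1404.0770 — 2 statements merged into one kernel-verified Lean document; each statement's English description precedes it below -/
import Mathlib

section
/- Let A_0, A_1, …, A_{n-1} be orthogonal d×d matrices and let v ∈ ℝ^d, z a d×d orthogonal matrix, and suppose the partial sums S_j = ∑_{i=0}^{j} z^i v are uniformly bounded by K. Then for 0 ≤ ℓ ≤ n, |∑_{j=0}^{ℓ} (A_0 A_1 ⋯ A_{j-1}) z^j v| ≤ 2K ∑_{k=1}^{ℓ-1} |A_k − I| + c(K, |v|), where c depends only on K and |v| (Abel resummation bound for twisted sums). -/
open Finset

-- telescoping: A0⋯A_{j-1} = A0 + ∑_{k=1}^{j-1} (A0⋯A_{k-1})(A_k − 1)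
lemma tele13 {R : Type*} [Ring R] (B : ℕ → R) :
    ∀ j, 1 ≤ j → ((List.range j).map B).prod
      = B 0 + ∑ k ∈ Finset.Ico 1 j, ((List.range k).map B).prod * (B k - 1) := by
  intro j hj
  induction j with
  | zero => omega
  | succ m ih =>
    rcases Nat.lt_or_ge m 1 with hm | hm
    · interval_cases m
      simp [List.range_succ]
    · rw [List.range_succ, List.map_append, List.prod_append]
      have : ((List.range m).map B).prod * ([m].map B).prod
          = ((List.range m).map B).prod + ((List.range m).map B).prod * (B m - 1) := by
        simp [mul_sub]
      rw [this, Finset.sum_Ico_succ_top hm, ih hm]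
      rw [add_assoc]

lemma keyid13 {R : Type*} [Ring R] (B : ℕ → R) (zz : R) (ℓ : ℕ) :
    ∑ j ∈ Finset.range (ℓ + 1), ((List.range j).map B).prod * zz ^ j
      = 1 + B 0 * ∑ j ∈ Finset.Ico 1 (ℓ + 1), zz ^ j
        + ∑ k ∈ Finset.Ico 1 ℓ,
            (((List.range k).map B).prod * (B k - 1)) * ∑ j ∈ Finset.Ico (k + 1) (ℓ + 1), zz ^ j := by
  rcases Nat.eq_zero_or_pos ℓ with rfl | hℓ
  · simp
  rw [Finset.range_eq_Ico, Finset.sum_eq_sum_Ico_succ_bot (by omega)]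
  have h1 : ∀ j ∈ Finset.Ico 1 (ℓ + 1),
      ((List.range j).map B).prod * zz ^ j
        = B 0 * zz ^ j + ∑ k ∈ Finset.Ico 1 j,
            (((List.range k).map B).prod * (B k - 1)) * zz ^ j := by
    intro j hj
    rw [tele13 B j (Finset.mem_Ico.mp hj).1, add_mul, Finset.sum_mul]
  rw [Finset.sum_congr rfl h1, Finset.sum_add_distrib, ← Finset.mul_sum,
    ← Finset.sum_Ico_Ico_comm']
  have h2 : ∀ k ∈ Finset.Ico 1 (ℓ + 1),
      (∑ j ∈ Finset.Ico (k + 1) (ℓ + 1),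
          (((List.range k).map B).prod * (B k - 1)) * zz ^ j)
        = (((List.range k).map B).prod * (B k - 1)) * ∑ j ∈ Finset.Ico (k + 1) (ℓ + 1), zz ^ j := by
    intro k _
    rw [Finset.mul_sum]
  rw [Finset.sum_congr rfl h2]
  have h3 : ∑ k ∈ Finset.Ico 1 (ℓ + 1),
      (((List.range k).map B).prod * (B k - 1)) * ∑ j ∈ Finset.Ico (k + 1) (ℓ + 1), zz ^ j
      = ∑ k ∈ Finset.Ico 1 ℓ,
      (((List.range k).map B).prod * (B k - 1)) * ∑ j ∈ Finset.Ico (k + 1) (ℓ + 1), zz ^ j := by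
    rw [Finset.sum_Ico_succ_top hℓ]
    simp
  rw [h3]
  simp [add_assoc]



theorem stmt_13 (K nv : ℝ) :
    ∃ c : ℝ, ∀ (d n : ℕ) (A : ℕ → Matrix.orthogonalGroup (Fin d) ℝ)
      (z : Matrix.orthogonalGroup (Fin d) ℝ) (v : EuclideanSpace ℝ (Fin d)),
      ‖v‖ = nv →
      (∀ j : ℕ, ‖∑ i ∈ Finset.range (j + 1),
          (Matrix.toEuclideanCLM (𝕜 := ℝ) ((z : Matrix (Fin d) (Fin d) ℝ) ^ i)) v‖ ≤ K) →
      ∀ ℓ ≤ n,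
        ‖∑ j ∈ Finset.range (ℓ + 1),
            (Matrix.toEuclideanCLM (𝕜 := ℝ) (n := Fin d)
              ((((List.range j).map fun k => (A k : Matrix (Fin d) (Fin d) ℝ)).prod
                * (z : Matrix (Fin d) (Fin d) ℝ) ^ j))) v‖
          ≤ 2 * K * ∑ k ∈ Finset.Ico 1 ℓ,
              ‖Matrix.toEuclideanCLM (𝕜 := ℝ) (n := Fin d)
                ((A k : Matrix (Fin d) (Fin d) ℝ) - 1)‖ + c := by
  refine ⟨K + 2 * nv, ?_⟩
  intro d n A z v hv hS ℓ hℓ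
  set φ := Matrix.toEuclideanCLM (𝕜 := ℝ) (n := Fin d) with hφ
  set B : ℕ → Matrix (Fin d) (Fin d) ℝ := fun k => (A k : Matrix (Fin d) (Fin d) ℝ) with hB
  set zz : Matrix (Fin d) (Fin d) ℝ := (z : Matrix (Fin d) (Fin d) ℝ) with hzz
  -- isometry for unitary matrices
  have isom : ∀ U : Matrix (Fin d) (Fin d) ℝ, U ∈ unitary (Matrix (Fin d) (Fin d) ℝ) →
      ∀ x : EuclideanSpace ℝ (Fin d), ‖φ U x‖ = ‖x‖ := by
    intro U hU x
    refine ContinuousLinearMap.norm_map_of_mem_unitary ?_ x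
    refine (Unitary.mem_iff).mpr ⟨?_, ?_⟩
    · rw [← map_star, ← map_mul, (Unitary.mem_iff.mp hU).1, map_one]
    · rw [← map_star, ← map_mul, (Unitary.mem_iff.mp hU).2, map_one]
  have memP : ∀ k : ℕ, ((List.range k).map B).prod ∈ unitary (Matrix (Fin d) (Fin d) ℝ) := by
    intro k
    refine (unitary (Matrix (Fin d) (Fin d) ℝ)).list_prod_mem ?_
    intro x hx
    simp only [List.mem_map] at hx
    obtain ⟨i, -, rfl⟩ := hx
    exact (A i).2
  -- notation for partial sums of z^j v
  set f : ℕ → EuclideanSpace ℝ (Fin d) := fun j => φ (zz ^ j) v with hf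
  have hf0 : f 0 = v := by simp [hf]
  have hK0 : ‖v‖ ≤ K := by
    have := hS 0
    simpa [hf0, hf] using this
  have hKpos : (0 : ℝ) ≤ K := le_trans (norm_nonneg v) hK0
  -- bound on the middle partial sums
  have hIco : ∀ a b : ℕ, a ≤ b →
      ∑ j ∈ Finset.Ico (a + 1) (b + 1), f j
        = (∑ i ∈ Finset.range (b + 1), f i) - ∑ i ∈ Finset.range (a + 1), f i :=
    fun a b hab => Finset.sum_Ico_eq_sub f (by omega)
  have hSf : ∀ m : ℕ, ‖∑ i ∈ Finset.range (m + 1), f i‖ ≤ K := fun m => hS m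
  have hu : ∀ a b : ℕ, a ≤ b → ‖∑ j ∈ Finset.Ico (a + 1) (b + 1), f j‖ ≤ 2 * K := by
    intro a b hab
    rw [hIco a b hab]
    calc ‖(∑ i ∈ Finset.range (b + 1), f i) - ∑ i ∈ Finset.range (a + 1), f i‖
        ≤ ‖∑ i ∈ Finset.range (b + 1), f i‖ + ‖∑ i ∈ Finset.range (a + 1), f i‖ :=
          norm_sub_le _ _
      _ ≤ K + K := add_le_add (hSf b) (hSf a)
      _ = 2 * K := by ring
  have hu0 : ‖∑ j ∈ Finset.Ico 1 (ℓ + 1), f j‖ ≤ K + nv := by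
    have h01 : (0 : ℕ) ≤ ℓ := Nat.zero_le _
    have := hIco 0 ℓ h01
    rw [show (0 : ℕ) + 1 = 1 from rfl] at this
    rw [this]
    have : ∑ i ∈ Finset.range (0 + 1), f i = v := by simp [hf0]
    rw [this]
    calc ‖(∑ i ∈ Finset.range (ℓ + 1), f i) - v‖
        ≤ ‖∑ i ∈ Finset.range (ℓ + 1), f i‖ + ‖v‖ := norm_sub_le _ _
      _ ≤ K + nv := add_le_add (hSf ℓ) (le_of_eq hv)
  -- rewrite the sum via the key identity
  have key : ∑ j ∈ Finset.range (ℓ + 1), φ (((List.range j).map B).prod * zz ^ j) v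
      = v + φ (B 0) (∑ j ∈ Finset.Ico 1 (ℓ + 1), f j)
        + ∑ k ∈ Finset.Ico 1 ℓ,
            φ (((List.range k).map B).prod * (B k - 1))
              (∑ j ∈ Finset.Ico (k + 1) (ℓ + 1), f j) := by
    have := keyid13 B zz ℓ
    calc ∑ j ∈ Finset.range (ℓ + 1), φ (((List.range j).map B).prod * zz ^ j) v
        = φ (∑ j ∈ Finset.range (ℓ + 1), ((List.range j).map B).prod * zz ^ j) v := by
          rw [map_sum, ContinuousLinearMap.sum_apply]
      _ = φ (1 + B 0 * ∑ j ∈ Finset.Ico 1 (ℓ + 1), zz ^ j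
            + ∑ k ∈ Finset.Ico 1 ℓ,
                (((List.range k).map B).prod * (B k - 1))
                  * ∑ j ∈ Finset.Ico (k + 1) (ℓ + 1), zz ^ j) v := by rw [this]
      _ = _ := by
          simp only [map_add, map_mul, map_one, map_sum, ContinuousLinearMap.add_apply,
            ContinuousLinearMap.mul_apply, ContinuousLinearMap.one_apply,
            ContinuousLinearMap.sum_apply, hf]
  rw [key]
  -- now bound the norm
  have hterm : ∀ k ∈ Finset.Ico 1 ℓ,
      ‖φ (((List.range k).map B).prod * (B k - 1))
          (∑ j ∈ Finset.Ico (k + 1) (ℓ + 1), f j)‖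
        ≤ ‖φ (B k - 1)‖ * (2 * K) := by
    intro k hk
    have hkℓ : k ≤ ℓ := le_of_lt (Finset.mem_Ico.mp hk).2
    rw [map_mul, ContinuousLinearMap.mul_apply, isom _ (memP k)]
    calc ‖φ (B k - 1) (∑ j ∈ Finset.Ico (k + 1) (ℓ + 1), f j)‖
        ≤ ‖φ (B k - 1)‖ * ‖∑ j ∈ Finset.Ico (k + 1) (ℓ + 1), f j‖ :=
          ContinuousLinearMap.le_opNorm _ _
      _ ≤ ‖φ (B k - 1)‖ * (2 * K) :=
          mul_le_mul_of_nonneg_left (hu k ℓ hkℓ) (norm_nonneg _)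
  calc ‖v + φ (B 0) (∑ j ∈ Finset.Ico 1 (ℓ + 1), f j)
        + ∑ k ∈ Finset.Ico 1 ℓ,
            φ (((List.range k).map B).prod * (B k - 1))
              (∑ j ∈ Finset.Ico (k + 1) (ℓ + 1), f j)‖
      ≤ ‖v + φ (B 0) (∑ j ∈ Finset.Ico 1 (ℓ + 1), f j)‖
        + ‖∑ k ∈ Finset.Ico 1 ℓ,
            φ (((List.range k).map B).prod * (B k - 1))
              (∑ j ∈ Finset.Ico (k + 1) (ℓ + 1), f j)‖ := norm_add_le _ _
    _ ≤ (‖v‖ + ‖φ (B 0) (∑ j ∈ Finset.Ico 1 (ℓ + 1), f j)‖)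
        + ∑ k ∈ Finset.Ico 1 ℓ,
            ‖φ (((List.range k).map B).prod * (B k - 1))
              (∑ j ∈ Finset.Ico (k + 1) (ℓ + 1), f j)‖ :=
          add_le_add (norm_add_le _ _) (norm_sum_le _ _)
    _ ≤ (nv + (K + nv)) + ∑ k ∈ Finset.Ico 1 ℓ, ‖φ (B k - 1)‖ * (2 * K) := by
          refine add_le_add (add_le_add (le_of_eq hv) ?_) (Finset.sum_le_sum hterm)
          rw [isom _ ((A 0).2)]
          exact hu0
    _ = 2 * K * ∑ k ∈ Finset.Ico 1 ℓ, ‖φ (B k - 1)‖ + (K + 2 * nv) := by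
          rw [← Finset.sum_mul, mul_comm]
          ring
end

section
/- Let (Y, μ) be a probability space with a countable measurable partition α, let F : Y → Y be Gibbs-Markov, and q_n the n-step inverse Jacobian satisfying q_n(y) ≤ D μ(a) for all a ∈ α_n (the partition into n-cylinders) and y ∈ a's image preimage. If H : Y → O(d) satisfies ∑_{a∈α} μ(a) (D_θ' H(a))^ε < ∞ where D_θ' H(a) is the local Lipschitz constant, then ∑_{a∈α_n} μ(a) ∑_{j=0}^{n-1} (D_θ' H(F^j a))^ε θ^{n-j} ≤ (1−θ)^{-1} ∑_{a∈α} μ(a)(D_θ' H(a))^ε, uniformly in n. -/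
open MeasureTheory

theorem stmt_16 {Y : Type*} [MeasurableSpace Y] (μ : Measure Y) [IsProbabilityMeasure μ]
    (F : Y → Y) (hFmeas : Measurable F) (hF : MeasurePreserving F μ μ)
    {ι : Type*} [Countable ι] (Z : ι → Set Y) (hZmeas : ∀ i, MeasurableSet (Z i))
    (hZdisj : Pairwise (Function.onFun Disjoint Z)) (hZcover : (⋃ i, Z i) = Set.univ)
    (θ ε : ℝ) (hθ0 : 0 < θ) (hθ1 : θ < 1) (hε0 : 0 < ε) (hε1 : ε ≤ 1)
    (D : (n : ℕ) → (Fin n → ι) → ℝ) (hD0 : ∀ n a, 0 ≤ D n a)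
    (hDmono : ∀ (n : ℕ) (a : Fin n → ι) (hn : 0 < n), D n a ≤ D 1 (fun _ => a ⟨0, hn⟩))
    (hsum : Summable fun i : ι => (μ (Z i)).toReal * (D 1 (fun _ => i)) ^ ε) :
    ∀ n : ℕ, 1 ≤ n →
      (∑' a : Fin n → ι,
        (μ (⋂ i : Fin n, F^[(i : ℕ)] ⁻¹' Z (a i))).toReal *
          ∑ j : Fin n,
            (D (n - (j : ℕ))
              (fun k : Fin (n - (j : ℕ)) =>
                a ⟨(j : ℕ) + (k : ℕ), by have hk := k.isLt; have hj := j.isLt; omega⟩)) ^ ε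
              * θ ^ (n - (j : ℕ)))
      ≤ (1 - θ)⁻¹ * ∑' i : ι, (μ (Z i)).toReal * (D 1 (fun _ => i)) ^ ε := by
  classical
  intro n hn
  set T : ℝ := ∑' i : ι, (μ (Z i)).toReal * (D 1 (fun _ => i)) ^ ε with hT
  have hterm0 : ∀ i : ι, 0 ≤ (μ (Z i)).toReal * (D 1 (fun _ => i)) ^ ε := fun i =>
    mul_nonneg ENNReal.toReal_nonneg (Real.rpow_nonneg (hD0 _ _) _)
  have hT0 : 0 ≤ T := tsum_nonneg hterm0
  have h1θ : 0 < 1 - θ := by linarith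
  have hC0 : 0 ≤ (1 - θ)⁻¹ * T := mul_nonneg (inv_nonneg.2 h1θ.le) hT0
  -- cylinder sets
  set cyl : (Fin n → ι) → Set Y := fun a => ⋂ i : Fin n, F^[(i : ℕ)] ⁻¹' Z (a i) with hcyl
  have hcylmeas : ∀ a, MeasurableSet (cyl a) := fun a =>
    MeasurableSet.iInter fun i => (hZmeas (a i)).preimage (hFmeas.iterate i)
  have hcyldisj : ∀ a b : Fin n → ι, a ≠ b → Disjoint (cyl a) (cyl b) := by
    intro a b hab
    obtain ⟨k, hk⟩ := Function.ne_iff.1 hab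
    exact Disjoint.mono (Set.iInter_subset _ k) (Set.iInter_subset _ k)
      ((hZdisj hk).preimage _)
  -- key fiber bound
  have hfiber : ∀ (j : Fin n) (s : Finset (Fin n → ι)),
      ∑ a ∈ s, (μ (cyl a)).toReal * (D 1 (fun _ => a j)) ^ ε ≤ T := by
    intro j s
    rw [← Finset.sum_fiberwise_of_maps_to (g := fun a : Fin n → ι => a j)
      (t := s.image (fun a => a j)) (fun a ha => Finset.mem_image_of_mem _ ha)]
    have hstep : ∀ i ∈ s.image (fun a : Fin n → ι => a j),
        ∑ a ∈ s.filter (fun a => a j = i), (μ (cyl a)).toReal * (D 1 (fun _ => a j)) ^ ε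
          ≤ (μ (Z i)).toReal * (D 1 (fun _ => i)) ^ ε := by
      intro i _
      have hcongr : ∀ a ∈ s.filter (fun a => a j = i),
          (μ (cyl a)).toReal * (D 1 (fun _ => a j)) ^ ε
            = (μ (cyl a)).toReal * (D 1 (fun _ => i)) ^ ε := by
        intro a ha
        rw [(Finset.mem_filter.1 ha).2]
      rw [Finset.sum_congr rfl hcongr, ← Finset.sum_mul]
      refine mul_le_mul_of_nonneg_right ?_ (Real.rpow_nonneg (hD0 _ _) _)
      have hmeas : ∑ a ∈ s.filter (fun a => a j = i), μ (cyl a) ≤ μ (Z i) := by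
        rw [← measure_biUnion_finset ?_ (fun a _ => hcylmeas a)]
        · rw [← (hF.iterate (j : ℕ)).measure_preimage (hZmeas i).nullMeasurableSet]
          refine measure_mono ?_
          intro y hy
          simp only [Set.mem_iUnion] at hy
          obtain ⟨a, ha, hy⟩ := hy
          have := Set.mem_iInter.1 hy j
          rwa [(Finset.mem_filter.1 ha).2] at this
        · intro a ha b hb hab
          exact hcyldisj a b hab
      calc ∑ a ∈ s.filter (fun a => a j = i), (μ (cyl a)).toReal
          = (∑ a ∈ s.filter (fun a => a j = i), μ (cyl a)).toReal := by
            rw [ENNReal.toReal_sum fun a _ => measure_ne_top μ _]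
        _ ≤ (μ (Z i)).toReal := ENNReal.toReal_mono (measure_ne_top μ _) hmeas
    calc ∑ i ∈ s.image (fun a : Fin n → ι => a j),
          ∑ a ∈ s.filter (fun a => a j = i), (μ (cyl a)).toReal * (D 1 (fun _ => a j)) ^ ε
        ≤ ∑ i ∈ s.image (fun a : Fin n → ι => a j),
            (μ (Z i)).toReal * (D 1 (fun _ => i)) ^ ε := Finset.sum_le_sum hstep
      _ ≤ T := Summable.sum_le_tsum _ (fun i _ => hterm0 i) hsum
  refine tsum_le_of_sum_le' hC0 ?_
  intro s
  -- bound each term using hDmono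
  have hstep1 : ∀ a ∈ s,
      (μ (cyl a)).toReal *
        ∑ j : Fin n,
          (D (n - (j : ℕ))
            (fun k : Fin (n - (j : ℕ)) =>
              a ⟨(j : ℕ) + (k : ℕ), by have hk := k.isLt; have hj := j.isLt; omega⟩)) ^ ε
            * θ ^ (n - (j : ℕ))
      ≤ ∑ j : Fin n, (μ (cyl a)).toReal * ((D 1 (fun _ => a j)) ^ ε * θ ^ (n - (j : ℕ))) := by
    intro a _
    rw [Finset.mul_sum]
    refine Finset.sum_le_sum fun j _ => ?_
    refine mul_le_mul_of_nonneg_left ?_ ENNReal.toReal_nonneg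
    refine mul_le_mul_of_nonneg_right ?_ (pow_nonneg hθ0.le _)
    refine Real.rpow_le_rpow (hD0 _ _) ?_ hε0.le
    have hpos : 0 < n - (j : ℕ) := by have := j.isLt; omega
    refine (hDmono _ _ hpos).trans_eq
      (congrArg (D 1) (funext fun _ => congrArg a (by ext; simp)))
  have hswap : ∑ a ∈ s, ∑ j : Fin n,
        (μ (cyl a)).toReal * ((D 1 (fun _ => a j)) ^ ε * θ ^ (n - (j : ℕ)))
      = ∑ j : Fin n, θ ^ (n - (j : ℕ)) *
          ∑ a ∈ s, (μ (cyl a)).toReal * (D 1 (fun _ => a j)) ^ ε := by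
    rw [Finset.sum_comm]
    refine Finset.sum_congr rfl fun j _ => ?_
    rw [Finset.mul_sum]
    refine Finset.sum_congr rfl fun a _ => ?_
    ring
  have hgeom : ∑ j : Fin n, θ ^ (n - (j : ℕ)) ≤ (1 - θ)⁻¹ := by
    rw [Fin.sum_univ_eq_sum_range (fun j => θ ^ (n - j)) n]
    have : ∀ j ∈ Finset.range n, θ ^ (n - j) = (fun k => θ ^ (k + 1)) (n - 1 - j) := by
      intro j hj
      have hj' := Finset.mem_range.1 hj
      congr 1
      omega
    rw [Finset.sum_congr rfl this, Finset.sum_range_reflect (fun k => θ ^ (k + 1)) n]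
    calc ∑ k ∈ Finset.range n, θ ^ (k + 1)
        ≤ ∑' k : ℕ, θ ^ (k + 1) := by
          refine Summable.sum_le_tsum _ (fun k _ => pow_nonneg hθ0.le _) ?_
          exact ((summable_geometric_of_lt_one hθ0.le hθ1).mul_left θ).congr
            (fun k => by rw [pow_succ, mul_comm])
      _ = θ * (1 - θ)⁻¹ := by
          rw [tsum_congr (fun k : ℕ => by rw [pow_succ, mul_comm] :
            ∀ k : ℕ, θ ^ (k + 1) = θ * θ ^ k), tsum_mul_left,
            tsum_geometric_of_lt_one hθ0.le hθ1]
      _ ≤ (1 - θ)⁻¹ := by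
          nlinarith [inv_nonneg.2 h1θ.le]
  calc ∑ a ∈ s, (μ (cyl a)).toReal *
        ∑ j : Fin n,
          (D (n - (j : ℕ))
            (fun k : Fin (n - (j : ℕ)) =>
              a ⟨(j : ℕ) + (k : ℕ), by have hk := k.isLt; have hj := j.isLt; omega⟩)) ^ ε
            * θ ^ (n - (j : ℕ))
      ≤ ∑ a ∈ s, ∑ j : Fin n,
          (μ (cyl a)).toReal * ((D 1 (fun _ => a j)) ^ ε * θ ^ (n - (j : ℕ))) :=
        Finset.sum_le_sum hstep1
    _ = ∑ j : Fin n, θ ^ (n - (j : ℕ)) *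
          ∑ a ∈ s, (μ (cyl a)).toReal * (D 1 (fun _ => a j)) ^ ε := hswap
    _ ≤ ∑ j : Fin n, θ ^ (n - (j : ℕ)) * T :=
        Finset.sum_le_sum fun j _ =>
          mul_le_mul_of_nonneg_left (hfiber j s) (pow_nonneg hθ0.le _)
    _ = (∑ j : Fin n, θ ^ (n - (j : ℕ))) * T := by rw [← Finset.sum_mul]
    _ ≤ (1 - θ)⁻¹ * T := mul_le_mul_of_nonneg_right hgeom hT0
end
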